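/- Let Σ be a symmetric positive definite N×N matrix, and let H = (1-τ)I + τM where M is diagonalizable with eigenvalues in [0,1], τ ∈ [0,1), and η = ∑_{i=1}^N (1-λ_i). If the radius parameters satisfy r ≤ r', then Vol(B(r, c, HΣHᵀ)) ≤ e^{-τη} Vol(B(r', c', Σ)) for any centers c, c'. -/
import Mathlib


open Matrix MeasureTheory

/-- The Mahalanobis ellipsoid `{x : (x-c)ᵀ S⁻¹ (x-c) ≤ r}`. -/
def ellipsoid (N : ℕ) (r : ℝ) (c : Fin N → ℝ) (S : Matrix (Fin N) (Fin N) ℝ) :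
    Set (Fin N → ℝ) :=
  {x | (x - c) ⬝ᵥ S⁻¹ *ᵥ (x - c) ≤ r}

/-- Quadratic-form change of variables: `(Hv)ᵀ A (Hv) = vᵀ (Hᵀ A H) v`. -/
lemma dot_mulVec_conj {N : ℕ} (A H : Matrix (Fin N) (Fin N) ℝ) (v : Fin N → ℝ) :
    (H *ᵥ v) ⬝ᵥ A *ᵥ (H *ᵥ v) = v ⬝ᵥ (Hᵀ * A * H) *ᵥ v := by
  rw [Matrix.dotProduct_mulVec, Matrix.dotProduct_mulVec, ← Matrix.vecMul_transpose,
    Matrix.vecMul_vecMul, Matrix.vecMul_vecMul, Matrix.dotProduct_mulVec, Matrix.mul_assoc]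

theorem volume_shrinkage
    (N : ℕ) (S M P : Matrix (Fin N) (Fin N) ℝ) (lam : Fin N → ℝ)
    (hS : S.PosDef)
    (hP : IsUnit P.det)
    (hM : M = P * Matrix.diagonal lam * P⁻¹)
    (hlam : ∀ i, lam i ∈ Set.Icc (0 : ℝ) 1)
    (τ : ℝ) (hτ : τ ∈ Set.Ico (0 : ℝ) 1)
    (H : Matrix (Fin N) (Fin N) ℝ)
    (hH : H = (1 - τ) • (1 : Matrix (Fin N) (Fin N) ℝ) + τ • M)
    (η : ℝ) (hη : η = ∑ i, (1 - lam i))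
    (r r' : ℝ) (hr : 0 < r) (hrr' : r ≤ r') (c c' : Fin N → ℝ) :
    volume (ellipsoid N r c (H * S * Hᵀ)) ≤
      ENNReal.ofReal (Real.exp (-(τ * η))) * volume (ellipsoid N r' c' S) := by
  obtain ⟨hτ0, hτ1⟩ := hτ
  have hr' : (0 : ℝ) < r' := lt_of_lt_of_le hr hrr'
  set α : ℝ := Real.sqrt (r / r') with hα
  have hα0 : 0 < α := Real.sqrt_pos.2 (div_pos hr hr')
  have hα1 : α ≤ 1 := by
    rw [hα, show (1 : ℝ) = Real.sqrt 1 by simp]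
    exact Real.sqrt_le_sqrt (by rw [div_le_one hr']; exact hrr')
  have hα2 : α ^ 2 = r / r' := Real.sq_sqrt (le_of_lt (div_pos hr hr'))
  -- diagonalize H
  have hHdiag : H = P * Matrix.diagonal (fun i => 1 - τ * (1 - lam i)) * P⁻¹ := by
    rw [hH, hM]
    have h1 : (1 : Matrix (Fin N) (Fin N) ℝ) = P * 1 * P⁻¹ := by
      rw [mul_one, Matrix.mul_nonsing_inv P hP]
    rw [h1]
    have : P * Matrix.diagonal (fun i => 1 - τ * (1 - lam i)) * P⁻¹
        = P * ((1 - τ) • (1 : Matrix (Fin N) (Fin N) ℝ) + τ • Matrix.diagonal lam) * P⁻¹ := by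
      congr 1
      congr 1
      ext i j
      by_cases h : i = j <;>
        simp [Matrix.diagonal, Matrix.one_apply, h, Matrix.smul_apply] <;> ring
    rw [this]
    simp only [Matrix.mul_add, Matrix.add_mul, Matrix.mul_smul, Matrix.smul_mul]
  have hdet : H.det = ∏ i, (1 - τ * (1 - lam i)) := by
    rw [hHdiag, Matrix.det_conj ((Matrix.isUnit_iff_isUnit_det P).mpr hP), Matrix.det_diagonal]
  have hfac : ∀ i : Fin N, 0 < 1 - τ * (1 - lam i) := by
    intro i
    obtain ⟨h0, h1⟩ := hlam i
    nlinarith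
  have hdetpos : 0 < H.det := by
    rw [hdet]; exact Finset.prod_pos fun i _ => hfac i
  have hdetle : H.det ≤ Real.exp (-(τ * η)) := by
    rw [hdet]
    have : ∀ i ∈ Finset.univ, 1 - τ * (1 - lam i) ≤ Real.exp (-(τ * (1 - lam i))) := by
      intro i _
      have := Real.add_one_le_exp (-(τ * (1 - lam i)))
      linarith
    calc ∏ i, (1 - τ * (1 - lam i))
        ≤ ∏ i, Real.exp (-(τ * (1 - lam i))) :=
          Finset.prod_le_prod (fun i _ => (hfac i).le) this
      _ = Real.exp (∑ i, -(τ * (1 - lam i))) := by rw [Real.exp_sum]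
      _ = Real.exp (-(τ * η)) := by
          congr 1
          rw [hη, Finset.mul_sum, ← Finset.sum_neg_distrib]
  have hHu : IsUnit H.det := isUnit_iff_ne_zero.2 (ne_of_gt hdetpos)
  have hHtu : IsUnit Hᵀ.det := by rwa [Matrix.det_transpose]
  -- (H S Hᵀ)⁻¹ = (H⁻¹)ᵀ S⁻¹ H⁻¹
  have hinv : (H * S * Hᵀ)⁻¹ = (H⁻¹)ᵀ * S⁻¹ * H⁻¹ := by
    rw [Matrix.mul_inv_rev, Matrix.mul_inv_rev, Matrix.transpose_nonsing_inv, Matrix.mul_assoc]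
  -- key conjugation identity
  have hconj : Hᵀ * ((H⁻¹)ᵀ * S⁻¹ * H⁻¹) * H = S⁻¹ := by
    rw [Matrix.transpose_nonsing_inv]
    calc Hᵀ * (Hᵀ⁻¹ * S⁻¹ * H⁻¹) * H = (Hᵀ * Hᵀ⁻¹) * S⁻¹ * (H⁻¹ * H) := by
          noncomm_ring
      _ = S⁻¹ := by
          rw [Matrix.mul_nonsing_inv _ hHtu, Matrix.nonsing_inv_mul _ hHu, one_mul, mul_one]
  -- set equality
  have hset : ellipsoid N r c (H * S * Hᵀ)
      = (fun y => c + (α • H) *ᵥ (y - c')) '' ellipsoid N r' c' S := by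
    ext x
    constructor
    · intro hx
      refine ⟨c' + α⁻¹ • (H⁻¹ *ᵥ (x - c)), ?_, ?_⟩
      · have hq : (x - c) ⬝ᵥ (H * S * Hᵀ)⁻¹ *ᵥ (x - c) ≤ r := hx
        have hrw : (H⁻¹ *ᵥ (x - c)) ⬝ᵥ S⁻¹ *ᵥ (H⁻¹ *ᵥ (x - c))
            = (x - c) ⬝ᵥ (H * S * Hᵀ)⁻¹ *ᵥ (x - c) := by
          rw [dot_mulVec_conj S⁻¹ H⁻¹ (x - c), hinv]
        show (c' + α⁻¹ • (H⁻¹ *ᵥ (x - c)) - c') ⬝ᵥ S⁻¹ *ᵥ (c' + α⁻¹ • (H⁻¹ *ᵥ (x - c)) - c') ≤ r'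
        have hsimp : c' + α⁻¹ • (H⁻¹ *ᵥ (x - c)) - c' = α⁻¹ • (H⁻¹ *ᵥ (x - c)) := by
          abel
        rw [hsimp, Matrix.mulVec_smul, smul_dotProduct, dotProduct_smul,
          smul_eq_mul, smul_eq_mul, ← mul_assoc, hrw]
        have hαinv : α⁻¹ * α⁻¹ = r' / r := by
          rw [← mul_inv]
          have : α * α = r / r' := by rw [← sq, hα2]
          rw [this, inv_div]
        rw [hαinv]
        calc r' / r * ((x - c) ⬝ᵥ (H * S * Hᵀ)⁻¹ *ᵥ (x - c)) ≤ r' / r * r := by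
              apply mul_le_mul_of_nonneg_left hq (le_of_lt (div_pos hr' hr))
          _ = r' := by field_simp
      · show c + (α • H) *ᵥ (c' + α⁻¹ • (H⁻¹ *ᵥ (x - c)) - c') = x
        have hsimp : c' + α⁻¹ • (H⁻¹ *ᵥ (x - c)) - c' = α⁻¹ • (H⁻¹ *ᵥ (x - c)) := by abel
        rw [hsimp, Matrix.smul_mulVec, Matrix.mulVec_smul, Matrix.mulVec_mulVec,
          Matrix.mul_nonsing_inv _ hHu, Matrix.one_mulVec, smul_smul,
          mul_inv_cancel₀ (ne_of_gt hα0), one_smul]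
        abel
    · rintro ⟨y, hy, rfl⟩
      have hq : (y - c') ⬝ᵥ S⁻¹ *ᵥ (y - c') ≤ r' := hy
      show (c + (α • H) *ᵥ (y - c') - c) ⬝ᵥ (H * S * Hᵀ)⁻¹ *ᵥ (c + (α • H) *ᵥ (y - c') - c) ≤ r
      have hsimp : c + (α • H) *ᵥ (y - c') - c = α • (H *ᵥ (y - c')) := by
        rw [Matrix.smul_mulVec]; abel
      rw [hsimp, Matrix.mulVec_smul, smul_dotProduct, dotProduct_smul,
        smul_eq_mul, smul_eq_mul, ← mul_assoc, dot_mulVec_conj, hinv, hconj]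
      have : α * α = r / r' := by rw [← sq, hα2]
      rw [this]
      calc r / r' * ((y - c') ⬝ᵥ S⁻¹ *ᵥ (y - c')) ≤ r / r' * r' := by
            apply mul_le_mul_of_nonneg_left hq (le_of_lt (div_pos hr hr'))
        _ = r := by field_simp
  -- volume computation
  have himage : (fun y => c + (α • H) *ᵥ (y - c')) '' ellipsoid N r' c' S
      = (c + ·) '' (Matrix.toLin' (α • H) '' ((-c' + ·) '' ellipsoid N r' c' S)) := by
    rw [← Set.image_comp, ← Set.image_comp]
    apply Set.image_congr
    intro y _
    simp only [Function.comp_apply, Matrix.toLin'_apply]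
    congr 1
    congr 1
    abel
  rw [hset, himage]
  have h1 : volume ((c + ·) '' (Matrix.toLin' (α • H) '' ((-c' + ·) '' ellipsoid N r' c' S)))
      = volume (Matrix.toLin' (α • H) '' ((-c' + ·) '' ellipsoid N r' c' S)) := by
    rw [Set.image_add_left, measure_preimage_add]
  have h2 : volume ((-c' + ·) '' ellipsoid N r' c' S) = volume (ellipsoid N r' c' S) := by
    rw [Set.image_add_left, measure_preimage_add]
  rw [h1, Measure.addHaar_image_linearMap, LinearMap.det_toLin', h2]
  have hdetsmul : (α • H).det = α ^ N * H.det := by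
    rw [Matrix.det_smul, Fintype.card_fin]
  have habs : |(α • H).det| = α ^ N * H.det := by
    rw [hdetsmul, abs_of_nonneg (mul_nonneg (pow_nonneg hα0.le N) hdetpos.le)]
  rw [habs]
  apply mul_le_mul_left
  apply ENNReal.ofReal_le_ofReal
  calc α ^ N * H.det ≤ 1 * H.det := by
        apply mul_le_mul_of_nonneg_right (pow_le_one₀ hα0.le hα1) hdetpos.le
    _ = H.det := one_mul _
    _ ≤ Real.exp (-(τ * η)) := hdetle
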